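/- Let γ : ℝ⁴ \ {0} → ℝ be defined by γ(x) = −log(‖x‖²), where ‖·‖ is the Euclidean norm. Then for every x ≠ 0, Δγ(x) + ‖∇γ(x)‖² = 0, where Δγ(x) = Σ_{i=1}^{4} ∂²γ/∂x_i²(x) is the Euclidean Laplacian and ∇γ(x) is the Euclidean gradient. (This is the key analytic verification in the paper's Example 5.2: the conformal factor γ satisfies equation Δγ + ((m−2)/2)|∇γ|² = 0 with m = 4, so that any holomorphic map from (ℂ² \ {0}, |z|^{−4}·can) into a (1,2)-symplectic almost Hermitian manifold is biharmonic.) -/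

import Mathlib

/-- The Laplacian of `ψ : E → ℝ` with respect to an orthonormal basis `b` of `E`:
`Δψ(x) = Σ_i D²ψ(x)(bᵢ, bᵢ)`. -/
noncomputable def lap {E : Type*} [NormedAddCommGroup E] [InnerProductSpace ℝ E]
    {F : Type*} [NormedAddCommGroup F] [NormedSpace ℝ F]
    {ι : Type*} [Fintype ι] (b : OrthonormalBasis ι ℝ E) (ψ : E → F) (x : E) : F :=
  ∑ i, fderiv ℝ (fderiv ℝ ψ) x (b i) (b i)

open scoped RealInnerProductSpace

section aux

variable {E : Type*} [NormedAddCommGroup E] [InnerProductSpace ℝ E]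

/-- The real inner product as an `ℝ`-bilinear continuous linear map. -/
noncomputable def rinnerSL (E : Type*) [NormedAddCommGroup E] [InnerProductSpace ℝ E] :
    E →L[ℝ] E →L[ℝ] ℝ :=
  (isBoundedBilinearMap_inner (𝕜 := ℝ) (E := E)).toContinuousLinearMap

@[simp] lemma rinnerSL_apply (x v : E) : rinnerSL E x v = ⟪x, v⟫ := rfl

/-- derivative of `y ↦ ⟪y,y⟫`. -/
lemma hasFDerivAt_inner_self (x : E) :
    HasFDerivAt (fun y : E => ⟪y, y⟫) ((2 : ℝ) • rinnerSL E x) x := by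
  have h := (hasFDerivAt_id x).inner ℝ (hasFDerivAt_id x)
  refine h.congr_fderiv ?_
  ext v
  simp only [ContinuousLinearMap.smul_apply, rinnerSL_apply, smul_eq_mul,
    ContinuousLinearMap.comp_apply, ContinuousLinearMap.prod_apply,
    ContinuousLinearMap.coe_id', id_eq, fderivInnerCLM_apply]
  rw [real_inner_comm v x]
  ring

lemma hasFDerivAt_logq (x : E) (hx : x ≠ 0) :
    HasFDerivAt (fun y : E => -Real.log ⟪y, y⟫)
      ((-(2 * (⟪x, x⟫)⁻¹)) • rinnerSL E x) x := by
  have hq : (⟪x, x⟫ : ℝ) ≠ 0 := inner_self_ne_zero.mpr hx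
  have h := ((hasFDerivAt_inner_self x).log hq).neg
  have heq : -((⟪x, x⟫)⁻¹ • ((2 : ℝ) • rinnerSL E x))
      = (-(2 * (⟪x, x⟫)⁻¹)) • rinnerSL E x := by
    ext v
    simp only [ContinuousLinearMap.neg_apply, ContinuousLinearMap.smul_apply,
      rinnerSL_apply, smul_eq_mul]
    ring
  rwa [heq] at h

lemma hasGradientAt_logq [CompleteSpace E] (x : E) (hx : x ≠ 0) :
    HasGradientAt (fun y : E => -Real.log ⟪y, y⟫)
      ((-(2 * (⟪x, x⟫)⁻¹)) • x) x := by
  rw [hasGradientAt_iff_hasFDerivAt]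
  have heq : (InnerProductSpace.toDual ℝ E) ((-(2 * (⟪x, x⟫)⁻¹)) • x)
      = (-(2 * (⟪x, x⟫)⁻¹)) • rinnerSL E x := by
    ext v
    simp only [InnerProductSpace.toDual_apply_apply, ContinuousLinearMap.smul_apply,
      rinnerSL_apply, smul_eq_mul]
    rw [real_inner_smul_left]
  rw [heq]
  exact hasFDerivAt_logq x hx

/-- derivative of the derivative field. -/
lemma hasFDerivAt_Phi (x : E) (hx : x ≠ 0) :
    HasFDerivAt (fun y : E => (-(2 * (⟪y, y⟫)⁻¹)) • rinnerSL E y)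
      ((-(2 * (⟪x, x⟫)⁻¹)) • rinnerSL E +
        ((-2 * -(⟪x, x⟫ ^ 2)⁻¹) • ((2 : ℝ) • rinnerSL E x)).smulRight (rinnerSL E x)) x := by
  have hq : (⟪x, x⟫ : ℝ) ≠ 0 := inner_self_ne_zero.mpr hx
  have h1 : HasDerivAt (fun t : ℝ => -(2 * t⁻¹)) (-2 * -((⟪x, x⟫ : ℝ) ^ 2)⁻¹) ⟪x, x⟫ := by
    have h2 := ((hasDerivAt_inv hq).const_mul (2 : ℝ)).neg
    refine h2.congr_deriv ?_
    ring
  have hc : HasFDerivAt (fun y : E => -(2 * (⟪y, y⟫)⁻¹))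
      ((-2 * -(⟪x, x⟫ ^ 2)⁻¹) • ((2 : ℝ) • rinnerSL E x)) x :=
    h1.comp_hasFDerivAt (f := fun y : E => ⟪y, y⟫) x (hasFDerivAt_inner_self x)
  exact hc.smul (rinnerSL E).hasFDerivAt

end aux

/-- Example 5.2 of the paper (key analytic verification, n = 2):
`γ(x) = -log(‖x‖²)` on `ℝ⁴ \ {0}` satisfies `Δγ + ‖∇γ‖² = 0`. -/
theorem example_C2_conformal_factor
    (γ : EuclideanSpace ℝ (Fin 4) → ℝ)
    (hγ : ∀ x : EuclideanSpace ℝ (Fin 4), x ≠ 0 → γ x = -Real.log (‖x‖ ^ 2)) :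
    ∀ x : EuclideanSpace ℝ (Fin 4), x ≠ 0 →
      lap (EuclideanSpace.basisFun (Fin 4) ℝ) γ x + ‖gradient γ x‖ ^ 2 = 0 := by
  intro x hx
  have hfeq : ∀ y : EuclideanSpace ℝ (Fin 4), y ≠ 0 →
      γ y = -Real.log ⟪y, y⟫ := by
    intro y hy
    rw [hγ y hy, real_inner_self_eq_norm_sq]
  have hsopen : IsOpen {y : EuclideanSpace ℝ (Fin 4) | y ≠ 0} := isOpen_compl_singleton
  have hmemnhds : ∀ y : EuclideanSpace ℝ (Fin 4), y ≠ 0 →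
      {y : EuclideanSpace ℝ (Fin 4) | y ≠ 0} ∈ nhds y := fun y hy => hsopen.mem_nhds hy
  have hEv : ∀ y : EuclideanSpace ℝ (Fin 4), y ≠ 0 →
      γ =ᶠ[nhds y] fun z => -Real.log ⟪z, z⟫ := fun y hy =>
    Filter.eventually_of_mem (hmemnhds y hy) fun z hz => hfeq z hz
  have hq : (⟪x, x⟫ : ℝ) ≠ 0 := inner_self_ne_zero.mpr hx
  have hkey : ((⟪x, x⟫ : ℝ) ^ 2)⁻¹ * ⟪x, x⟫ = (⟪x, x⟫ : ℝ)⁻¹ := by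
    rw [sq, mul_inv, mul_assoc, inv_mul_cancel₀ hq, mul_one]
  -- gradient
  have hgrad : gradient γ x = (-(2 * (⟪x, x⟫)⁻¹)) • x := by
    rw [(hEv x hx).gradient_eq]
    exact (hasGradientAt_logq x hx).gradient
  -- first derivative field
  have hΦ : fderiv ℝ γ =ᶠ[nhds x]
      (fun y => (-(2 * (⟪y, y⟫)⁻¹)) • rinnerSL (EuclideanSpace ℝ (Fin 4)) y) := by
    refine Filter.eventually_of_mem (hmemnhds x hx) fun y hy => ?_
    rw [(hEv y hy).fderiv_eq]
    exact (hasFDerivAt_logq y hy).fderiv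
  have h2 : fderiv ℝ (fderiv ℝ γ) x =
      (-(2 * (⟪x, x⟫)⁻¹)) • rinnerSL (EuclideanSpace ℝ (Fin 4)) +
        ((-2 * -(⟪x, x⟫ ^ 2)⁻¹) • ((2 : ℝ) • rinnerSL (EuclideanSpace ℝ (Fin 4)) x)).smulRight
          (rinnerSL (EuclideanSpace ℝ (Fin 4)) x) := by
    rw [hΦ.fderiv_eq]
    exact (hasFDerivAt_Phi x hx).fderiv
  -- compute the Laplacian
  have hlap : lap (EuclideanSpace.basisFun (Fin 4) ℝ) γ x = -4 * (⟪x, x⟫)⁻¹ := by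
    unfold lap
    rw [h2]
    have hterm : ∀ i : Fin 4,
        ((-(2 * (⟪x, x⟫)⁻¹)) • rinnerSL (EuclideanSpace ℝ (Fin 4)) +
          ((-2 * -(⟪x, x⟫ ^ 2)⁻¹) • ((2 : ℝ) • rinnerSL (EuclideanSpace ℝ (Fin 4)) x)).smulRight
            (rinnerSL (EuclideanSpace ℝ (Fin 4)) x))
            ((EuclideanSpace.basisFun (Fin 4) ℝ) i) ((EuclideanSpace.basisFun (Fin 4) ℝ) i)
        = -(2 * (⟪x, x⟫)⁻¹) + (4 * (⟪x, x⟫ ^ 2)⁻¹) * (x i * x i) := by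
      intro i
      rw [EuclideanSpace.basisFun_apply]
      simp only [ContinuousLinearMap.add_apply, ContinuousLinearMap.smul_apply,
        ContinuousLinearMap.smulRight_apply, rinnerSL_apply, smul_eq_mul,
        EuclideanSpace.inner_single_right, EuclideanSpace.inner_single_left,
        map_one, one_mul, mul_one, RCLike.inner_apply, conj_trivial,
        EuclideanSpace.single_apply, if_pos]
      ring
    rw [Finset.sum_congr rfl fun i _ => hterm i, Finset.sum_add_distrib]
    have hsum : ∑ i : Fin 4, (4 * ((⟪x, x⟫ : ℝ) ^ 2)⁻¹) * (x i * x i)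
        = 4 * (⟪x, x⟫ ^ 2)⁻¹ * ⟪x, x⟫ := by
      rw [← Finset.mul_sum, PiLp.inner_apply]
      simp only [RCLike.inner_apply, conj_trivial]
    rw [hsum]
    simp only [Finset.sum_const, Finset.card_univ, Fintype.card_fin, nsmul_eq_mul]
    rw [mul_assoc 4 (((⟪x, x⟫ : ℝ)) ^ 2)⁻¹ ⟪x, x⟫, hkey]
    ring
  have hnorm : ‖gradient γ x‖ ^ 2 = 4 * (⟪x, x⟫)⁻¹ := by
    rw [hgrad, norm_smul, mul_pow, Real.norm_eq_abs, sq_abs, ← real_inner_self_eq_norm_sq]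
    have hrw : (-(2 * (⟪x, x⟫ : ℝ)⁻¹)) ^ 2 * ⟪x, x⟫
        = 4 * (((⟪x, x⟫ : ℝ)) ^ 2)⁻¹ * ⟪x, x⟫ := by
      ring
    rw [hrw, mul_assoc 4 (((⟪x, x⟫ : ℝ)) ^ 2)⁻¹ ⟪x, x⟫, hkey]
  rw [hlap, hnorm]
  ring
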